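/- arXiv:2512.16216 — 2 statements merged into one kernel-verified Lean document; each statement's English description precedes it below -/
import Mathlib

section
/- Let M : ℝ³ → ℝ³ be a C² diffeomorphism with Jacobian J_M and determinant J_d = det J_M > 0, and let v be the Piola transform of a C¹ vector field v̂, i.e. v ∘ M = J_d⁻¹ J_M v̂. Then the gradient of v satisfies (∇v) ∘ M = J_d⁻¹ J_M (∇̂ v̂) J_M⁻¹ − J_d⁻² J_M C J_M⁻¹ + J_d⁻¹ D J_M⁻¹, where C_{ij} = v̂_i ∂J_d/∂x̂_j and D_{ij} = Σ_k v̂_k ∂²x_i/(∂x̂_j ∂x̂_k). -/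
/-- The Jacobian matrix of a map `f : ℝ³ → ℝ³` at a point `x`:
entry `(i, j)` is `∂ f_i / ∂ x_j`. -/
noncomputable def jacMat (f : (Fin 3 → ℝ) → (Fin 3 → ℝ)) (x : Fin 3 → ℝ) :
    Matrix (Fin 3) (Fin 3) ℝ :=
  Matrix.of fun i j => fderiv ℝ f x (Pi.single j 1) i

noncomputable def matOf (L : (Fin 3 → ℝ) →L[ℝ] (Fin 3 → ℝ)) : Matrix (Fin 3) (Fin 3) ℝ :=
  Matrix.of fun i j => L (Pi.single j 1) i

lemma matOf_eq (L : (Fin 3 → ℝ) →L[ℝ] (Fin 3 → ℝ)) :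
    matOf L = LinearMap.toMatrix (Pi.basisFun ℝ (Fin 3)) (Pi.basisFun ℝ (Fin 3)) L.toLinearMap := by
  ext i j; simp [matOf, LinearMap.toMatrix_apply]

lemma matOf_comp (L₁ L₂ : (Fin 3 → ℝ) →L[ℝ] (Fin 3 → ℝ)) :
    matOf (L₁.comp L₂) = matOf L₁ * matOf L₂ := by
  simp only [matOf_eq, ContinuousLinearMap.coe_comp]
  exact LinearMap.toMatrix_comp _ (Pi.basisFun ℝ (Fin 3)) _ _ _

/-- Gradient formula for the Piola transform: if `M` is a C² diffeomorphism
with Jacobian `J_M`, determinant `J_d > 0`, and `v ∘ M = J_d⁻¹ J_M vh` (Piola transform of a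
C¹ field `vh`), then
`(∇v) ∘ M = J_d⁻¹ J_M (∇̂ vh) J_M⁻¹ − J_d⁻² J_M C J_M⁻¹ + J_d⁻¹ D J_M⁻¹`,
where `C i j = vh_i ∂J_d/∂y_j` and `D i j = Σ_k vh_k ∂²M_i/(∂y_j ∂y_k)`. -/
theorem piola_gradient
    (M Minv : (Fin 3 → ℝ) → (Fin 3 → ℝ))
    (hM : ContDiff ℝ 2 M) (hMinv : ContDiff ℝ 2 Minv)
    (hleft : Function.LeftInverse Minv M) (hright : Function.RightInverse Minv M)
    (hJd : ∀ x : Fin 3 → ℝ, 0 < (jacMat M x).det)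
    (vh v : (Fin 3 → ℝ) → (Fin 3 → ℝ))
    (hvh : ContDiff ℝ 1 vh)
    (hPiola : ∀ y : Fin 3 → ℝ,
      v (M y) = ((jacMat M y).det)⁻¹ • (jacMat M y).mulVec (vh y))
    (y : Fin 3 → ℝ) :
    jacMat v (M y) =
      ((jacMat M y).det)⁻¹ • (jacMat M y * jacMat vh y * (jacMat M y)⁻¹)
      - (((jacMat M y).det) ^ 2)⁻¹ •
          (jacMat M y *
            (Matrix.of fun i j =>
              vh y i * fderiv ℝ (fun z => (jacMat M z).det) y (Pi.single j 1)) *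
            (jacMat M y)⁻¹)
      + ((jacMat M y).det)⁻¹ •
          ((Matrix.of fun i j =>
              ∑ k : Fin 3,
                vh y k * fderiv ℝ (fun z => fderiv ℝ M z (Pi.single k 1) i) y (Pi.single j 1)) *
            (jacMat M y)⁻¹) := by
  have hdet_ne : ∀ z, (jacMat M z).det ≠ 0 := fun z => (hJd z).ne'
  -- differentiability of Jacobian entries
  have hM1 : ContDiff ℝ 1 (fderiv ℝ M) := hM.fderiv_right (by norm_num)
  have hJentry : ∀ i k : Fin 3, Differentiable ℝ fun z => fderiv ℝ M z (Pi.single k 1) i := by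
    intro i k
    have h1 : ContDiff ℝ 1 fun z => fderiv ℝ M z (Pi.single k 1) := hM1.clm_apply contDiff_const
    exact (contDiff_pi.mp h1 i).differentiable one_ne_zero
  have hJentry' : ∀ i k : Fin 3, Differentiable ℝ fun z => jacMat M z i k := hJentry
  -- differentiability of det
  have hdet : Differentiable ℝ fun z => (jacMat M z).det := by
    simp only [Matrix.det_fin_three]
    exact ((((hJentry' 0 0).mul (hJentry' 1 1)).mul (hJentry' 2 2)).sub
      (((hJentry' 0 0).mul (hJentry' 1 2)).mul (hJentry' 2 1))).sub
      ((((hJentry' 0 1).mul (hJentry' 1 0)).mul (hJentry' 2 2))) |>.add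
      ((((hJentry' 0 1).mul (hJentry' 1 2)).mul (hJentry' 2 0))) |>.add
      ((((hJentry' 0 2).mul (hJentry' 1 0)).mul (hJentry' 2 1))) |>.sub
      ((((hJentry' 0 2).mul (hJentry' 1 1)).mul (hJentry' 2 0)))
  have hvhd : Differentiable ℝ vh := hvh.differentiable one_ne_zero
  have hvk : ∀ k : Fin 3, Differentiable ℝ fun z => vh z k := fun k z =>
    (differentiableAt_pi.mp (hvhd z)) k
  -- the pushed-forward field expressed in reference coordinates
  set w : (Fin 3 → ℝ) → (Fin 3 → ℝ) :=
    fun z => ((jacMat M z).det)⁻¹ • (jacMat M z).mulVec (vh z) with hw_def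
  have hwcomp : ∀ i : Fin 3, ∀ z, (fun z => w z i) z =
      ((jacMat M z).det)⁻¹ * ∑ k : Fin 3, jacMat M z i k * vh z k := by
    intro i z; simp [hw_def, Matrix.mulVec, dotProduct]
  have hwidiff : ∀ i : Fin 3, Differentiable ℝ fun z => w z i := by
    intro i
    have : (fun z => w z i) =
        fun z => ((jacMat M z).det)⁻¹ * ∑ k : Fin 3, jacMat M z i k * vh z k :=
      funext (hwcomp i)
    rw [this]
    exact (hdet.inv hdet_ne).mul
      (Differentiable.fun_sum fun k _ => (hJentry' _ k).mul (hvk k))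
  have hw : Differentiable ℝ w := by
    intro z; exact differentiableAt_pi.mpr fun i => hwidiff i z
  -- v is differentiable at M y
  have hveq : v = fun x => w (Minv x) := by
    funext x
    have : v (M (Minv x)) = w (Minv x) := hPiola (Minv x)
    rwa [hright x] at this
  have hvdiff : DifferentiableAt ℝ v (M y) := by
    rw [hveq]
    exact ((hw _).comp _ ((hMinv.differentiable (by norm_num)) _))
  -- chain rule
  have hcomp : fderiv ℝ w y = (fderiv ℝ v (M y)).comp (fderiv ℝ M y) := by
    have hwv : w = v ∘ M := funext fun z => (hPiola z).symm
    rw [hwv]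
    exact fderiv_comp y hvdiff ((hM.differentiable (by norm_num)) y)
  have hmat : jacMat w y = jacMat v (M y) * jacMat M y := by
    have : jacMat w y = matOf (fderiv ℝ w y) := rfl
    rw [this, hcomp, matOf_comp]; rfl
  have hunit : IsUnit (jacMat M y).det := (hdet_ne y).isUnit
  have hvM : jacMat v (M y) = jacMat w y * (jacMat M y)⁻¹ := by
    rw [hmat, Matrix.mul_assoc, Matrix.mul_nonsing_inv _ hunit, Matrix.mul_one]
  -- the bracketed matrix
  set B : Matrix (Fin 3) (Fin 3) ℝ :=
    ((jacMat M y).det)⁻¹ • (jacMat M y * jacMat vh y)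
      - (((jacMat M y).det) ^ 2)⁻¹ •
          (jacMat M y *
            (Matrix.of fun i j =>
              vh y i * fderiv ℝ (fun z => (jacMat M z).det) y (Pi.single j 1)))
      + ((jacMat M y).det)⁻¹ •
          (Matrix.of fun i j =>
            ∑ k : Fin 3,
              vh y k * fderiv ℝ (fun z => fderiv ℝ M z (Pi.single k 1) i) y (Pi.single j 1))
    with hB_def
  have hB : jacMat w y = B := by
    ext i j
    -- left side: component derivative
    have hL : jacMat w y i j = fderiv ℝ (fun z => w z i) y (Pi.single j 1) := by
      have := fderiv_pi (𝕜 := ℝ) (φ := fun i z => w z i) (x := y)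
        (fun i => (hwidiff i y))
      show fderiv ℝ w y (Pi.single j 1) i = _
      rw [this]; rfl
    rw [hL]
    -- compute the derivative
    have hS : HasFDerivAt (fun z => ∑ k : Fin 3, jacMat M z i k * vh z k)
        (∑ k : Fin 3, (jacMat M y i k • fderiv ℝ (fun z => vh z k) y
          + vh y k • fderiv ℝ (fun z => jacMat M z i k) y)) y := by
      apply HasFDerivAt.fun_sum
      intro k _
      exact ((hJentry' i k y).hasFDerivAt).mul ((hvk k y).hasFDerivAt)
    have hinv : HasFDerivAt (fun z => ((jacMat M z).det)⁻¹)
        ((-ContinuousLinearMap.mulLeftRight ℝ ℝ ((jacMat M y).det)⁻¹ ((jacMat M y).det)⁻¹).comp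
          (fderiv ℝ (fun z => (jacMat M z).det) y)) y :=
      (hasFDerivAt_inv' (hdet_ne y)).comp y ((hdet y).hasFDerivAt)
    have hprod := hinv.fun_mul hS
    have hfun : (fun z => w z i) =
        fun z => ((jacMat M z).det)⁻¹ * ∑ k : Fin 3, jacMat M z i k * vh z k :=
      funext (hwcomp i)
    rw [hfun, hprod.fderiv]
    -- now unfold everything
    have hvj : ∀ k : Fin 3, fderiv ℝ (fun z => vh z k) y (Pi.single j 1) = jacMat vh y k j := by
      intro k
      have := fderiv_pi (𝕜 := ℝ) (φ := fun k z => vh z k) (x := y) (fun k => hvk k y)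
      show _ = fderiv ℝ vh y (Pi.single j 1) k
      rw [this]; rfl
    simp only [hB_def, ContinuousLinearMap.add_apply, ContinuousLinearMap.smul_apply,
      ContinuousLinearMap.coe_sum', Finset.sum_apply, Pi.smul_apply, smul_eq_mul,
      ContinuousLinearMap.coe_comp', Function.comp_apply, ContinuousLinearMap.neg_apply,
      ContinuousLinearMap.mulLeftRight_apply,
      Matrix.add_apply, Matrix.sub_apply, Matrix.smul_apply, Matrix.mul_apply,
      Matrix.of_apply, jacMat, Fin.sum_univ_three, hvj]
    ring
  rw [hvM, hB]
  rw [hB_def]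
  simp only [Matrix.sub_mul, Matrix.add_mul, Matrix.smul_mul, Matrix.mul_assoc]
end

section
/- Let H be a real Hilbert space, V_h ⊆ H a closed subspace, and a : H × H → ℝ a bilinear form that is coercive on V_h with constant 1/2 (a(v,v) ≥ (1/2)‖v‖²) and bounded with constant ω (|a(u,v)| ≤ ω‖u‖‖v‖). Let u ∈ H and u_h ∈ V_h. Then ‖u − u_h‖ ≤ inf_{w ∈ V_h} ((1 + 2ω)‖u − w‖) + 2 sup_{0 ≠ w ∈ V_h} |a(u − u_h, w)|/‖w‖. -/
/-- Abstract Strang/Céa-type estimate: let `H` be a real Hilbert space,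
`V_h ⊆ H` a closed subspace, `a` a bilinear form coercive on `V_h` with constant `1/2` and
bounded with constant `ω`. Then for `u ∈ H`, `u_h ∈ V_h`,
`‖u − u_h‖ ≤ inf_{w ∈ V_h} (1 + 2ω)‖u − w‖ + 2 sup_{0≠w∈V_h} |a(u − u_h, w)|/‖w‖`.
The inf/sup are phrased via universal quantification: for any bound `E` on the consistency
term and any `w ∈ V_h`, the estimate holds. -/
theorem strang_estimate
    {H : Type*} [NormedAddCommGroup H] [InnerProductSpace ℝ H] [CompleteSpace H]
    (Vh : Submodule ℝ H) (hVh : IsClosed (Vh : Set H))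
    (a : H →ₗ[ℝ] H →ₗ[ℝ] ℝ) (ω : ℝ) (hω : 0 < ω)
    (hcoer : ∀ v ∈ Vh, (1 / 2) * ‖v‖ ^ 2 ≤ a v v)
    (hbdd : ∀ u v : H, |a u v| ≤ ω * ‖u‖ * ‖v‖)
    (u : H) (uh : H) (huh : uh ∈ Vh)
    (E : ℝ) (hE : 0 ≤ E)
    (hconsistency : ∀ w ∈ Vh, |a (u - uh) w| ≤ E * ‖w‖) :
    ∀ w ∈ Vh, ‖u - uh‖ ≤ (1 + 2 * ω) * ‖u - w‖ + 2 * E := by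
  intro w hw
  set v := w - uh with hv
  have hvVh : v ∈ Vh := Vh.sub_mem hw huh
  -- key estimate : ‖v‖ ≤ 2ω‖u - w‖ + 2E
  have key : ‖v‖ ≤ 2 * ω * ‖u - w‖ + 2 * E := by
    rcases eq_or_ne v 0 with h0 | h0
    · rw [h0, norm_zero]
      positivity
    · have hvpos : (0:ℝ) < ‖v‖ := norm_pos_iff.mpr h0
      have h1 : (1/2) * ‖v‖^2 ≤ a v v := hcoer v hvVh
      have h2 : a v v = a (w - u) v + a (u - uh) v := by
        have : v = (w - u) + (u - uh) := by rw [hv]; abel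
        rw [this]
        simp [map_add]
      have h3 : a (w - u) v ≤ ω * ‖u - w‖ * ‖v‖ := by
        calc a (w - u) v ≤ |a (w - u) v| := le_abs_self _
          _ ≤ ω * ‖w - u‖ * ‖v‖ := hbdd _ _
          _ = ω * ‖u - w‖ * ‖v‖ := by rw [norm_sub_rev]
      have h4 : a (u - uh) v ≤ E * ‖v‖ :=
        (le_abs_self _).trans (hconsistency v hvVh)
      have : (1/2) * ‖v‖^2 ≤ (ω * ‖u - w‖ + E) * ‖v‖ := by
        rw [h2] at h1; nlinarith
      have := (mul_le_mul_iff_of_pos_right hvpos).mp (by nlinarith [sq_nonneg ‖v‖] :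
        (1/2) * ‖v‖ * ‖v‖ ≤ (ω * ‖u - w‖ + E) * ‖v‖)
      linarith
  calc ‖u - uh‖ = ‖(u - w) + v‖ := by rw [hv]; congr 1; abel
    _ ≤ ‖u - w‖ + ‖v‖ := norm_add_le _ _
    _ ≤ ‖u - w‖ + (2 * ω * ‖u - w‖ + 2 * E) := by linarith
    _ = (1 + 2 * ω) * ‖u - w‖ + 2 * E := by ring
end
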